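/- Let W be the lazy random walk on a finite simple connected regular graph G = (V,E) with #V ≥ 2, and let s ∈ ℕ with s ≥ t_mix + 1. If A_1, A_2 ⊂ ℕ are finite intervals with min(A_1) ≥ s and min(A_2) − max(A_1) ≥ s, then for every starting vertex ρ: P_ρ(R^W(A_1) ∩ R^W(A_2) ≠ ∅) ≤ 4·#A_1·#A_2 / #V, where R^W(A) = {W(n) : n ∈ A} is the range of the walk on the time set A. -/

import Mathlib

set_option linter.unusedSectionVars false
set_option linter.unusedTactic false
set_option linter.unusedVariables false
set_option maxHeartbeats 1000000


open Finset

variable {V : Type*} [Fintype V] [DecidableEq V] [Nonempty V]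

/-- One-step transition kernel of the lazy random walk on `G`:
stay put with probability `1/2`, otherwise move to a uniformly chosen neighbour. -/
noncomputable def lazyStep (G : SimpleGraph V) [DecidableRel G.Adj] (x y : V) : ℝ :=
  if x = y then 1 / 2 else if G.Adj x y then 1 / (2 * (G.degree x : ℝ)) else 0

/-- `n`-step transition probabilities of the lazy random walk. -/
noncomputable def lazyProb (G : SimpleGraph V) [DecidableRel G.Adj] : ℕ → V → V → ℝ
  | 0, x, y => if x = y then 1 else 0
  | n + 1, x, y => ∑ z : V, lazyStep G x z * lazyProb G n z y

/-- The stationary (degree-biased) distribution `π(x) = deg(x)/(2#E)`. -/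
noncomputable def statDist (G : SimpleGraph V) [DecidableRel G.Adj] (x : V) : ℝ :=
  (G.degree x : ℝ) / (2 * (G.edgeFinset.card : ℝ))

/-- The uniform `(ℓ∞, 1/4)` mixing time. -/
noncomputable def tmix (G : SimpleGraph V) [DecidableRel G.Adj] : ℕ :=
  sInf {n : ℕ | ∀ x y : V, |lazyProb G n x y / statDist G y - 1| ≤ 1 / 4}

/-- Extension of a finite path to all of `ℕ` (constant after time `N`). -/
def extPath (N : ℕ) (γ : Fin (N + 1) → V) : ℕ → V :=
  fun n => γ ⟨min n N, Nat.lt_succ_of_le (min_le_right n N)⟩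

/-- Weight of a finite path under the lazy random walk kernel. -/
noncomputable def pathWeight (G : SimpleGraph V) [DecidableRel G.Adj]
    (N : ℕ) (γ : Fin (N + 1) → V) : ℝ :=
  ∏ i ∈ Finset.range N, lazyStep G (extPath N γ i) (extPath N γ (i + 1))

open Classical in
/-- Probability, for the lazy random walk started at `ρ`, of a path event
depending only on the first `N+1` coordinates. -/
noncomputable def walkProb (G : SimpleGraph V) [DecidableRel G.Adj]
    (ρ : V) (N : ℕ) (E : (ℕ → V) → Prop) : ℝ :=
  ∑ γ : Fin (N + 1) → V,
    if extPath N γ 0 = ρ ∧ E (extPath N γ) then pathWeight G N γ else 0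

open Classical in
/-- Expectation, for the lazy random walk started at `ρ`, of a path functional
depending only on the first `N+1` coordinates. -/
noncomputable def walkExp (G : SimpleGraph V) [DecidableRel G.Adj]
    (ρ : V) (N : ℕ) (f : (ℕ → V) → ℝ) : ℝ :=
  ∑ γ : Fin (N + 1) → V,
    if extPath N γ 0 = ρ then pathWeight G N γ * f (extPath N γ) else 0

open Classical in
/-- Probability of a path event for the lazy random walk started from `π`. -/
noncomputable def walkProbStat (G : SimpleGraph V) [DecidableRel G.Adj]
    (N : ℕ) (E : (ℕ → V) → Prop) : ℝ :=
  ∑ γ : Fin (N + 1) → V,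
    if E (extPath N γ) then statDist G (extPath N γ 0) * pathWeight G N γ else 0

/-- Expectation of a path functional for the lazy random walk started from `π`. -/
noncomputable def walkExpStat (G : SimpleGraph V) [DecidableRel G.Adj]
    (N : ℕ) (f : (ℕ → V) → ℝ) : ℝ :=
  ∑ γ : Fin (N + 1) → V,
    statDist G (extPath N γ 0) * pathWeight G N γ * f (extPath N γ)

open Classical in
/-- Probability of a joint event for two independent lazy random walks,
each started from the stationary distribution. -/
noncomputable def twoWalkProbStat (G : SimpleGraph V) [DecidableRel G.Adj]
    (N : ℕ) (E : (ℕ → V) → (ℕ → V) → Prop) : ℝ :=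
  ∑ γ₁ : Fin (N + 1) → V, ∑ γ₂ : Fin (N + 1) → V,
    if E (extPath N γ₁) (extPath N γ₂) then
      (statDist G (extPath N γ₁ 0) * pathWeight G N γ₁) *
      (statDist G (extPath N γ₂ 0) * pathWeight G N γ₂) else 0

open Classical in
/-- Probability of a joint event for two independent lazy random walks,
both started at the vertex `ρ`. -/
noncomputable def twoWalkProbFrom (G : SimpleGraph V) [DecidableRel G.Adj]
    (ρ : V) (N : ℕ) (E : (ℕ → V) → (ℕ → V) → Prop) : ℝ :=
  ∑ γ₁ : Fin (N + 1) → V, ∑ γ₂ : Fin (N + 1) → V,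
    if extPath N γ₁ 0 = ρ ∧ extPath N γ₂ 0 = ρ ∧ E (extPath N γ₁) (extPath N γ₂) then
      pathWeight G N γ₁ * pathWeight G N γ₂ else 0

/-- Range of a path over a finite set of times. -/
def walkRange (w : ℕ → V) (A : Finset ℕ) : Finset V := A.image w

/-- `q̄^G(s)`: averaged intersection probability of two independent lazy walks
started at the same (uniform) vertex. -/
noncomputable def qbar (G : SimpleGraph V) [DecidableRel G.Adj] (s : ℕ) : ℝ :=
  (1 / (Fintype.card V : ℝ)) * ∑ ρ : V,
    twoWalkProbFrom G ρ s (fun w₁ w₂ =>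
      (walkRange w₁ (Finset.Icc 0 s) ∩ walkRange w₂ (Finset.Icc 1 s)).Nonempty)

/-- `H^W_ρ(m) = Σ_{i=0}^m Σ_{j=0}^m P_ρ(W(i+j)=ρ)`. -/
noncomputable def HW (G : SimpleGraph V) [DecidableRel G.Adj] (ρ : V) (m : ℕ) : ℝ :=
  ∑ i ∈ Finset.range (m + 1), ∑ j ∈ Finset.range (m + 1), lazyProb G (i + j) ρ ρ

section AuxLemmas



variable (G : SimpleGraph V) [DecidableRel G.Adj]

lemma lazyStep_nonneg (x y : V) : 0 ≤ lazyStep G x y := by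
  unfold lazyStep; split_ifs <;> positivity

lemma lazyProb_nonneg (n : ℕ) (x y : V) : 0 ≤ lazyProb G n x y := by
  induction n generalizing x y with
  | zero => unfold lazyProb; split_ifs <;> norm_num
  | succ n ih =>
    unfold lazyProb
    exact Finset.sum_nonneg fun z _ => mul_nonneg (lazyStep_nonneg G x z) (ih z y)

lemma lazyStep_split (x y : V) :
    lazyStep G x y = (if x = y then 1/2 else 0) + (if G.Adj x y then 1 / (2 * (G.degree x : ℝ)) else 0) := by
  unfold lazyStep
  by_cases h : x = y
  · simp [h, G.irrefl]
  · simp [h]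

variable {G} {d : ℕ} (hreg : G.IsRegularOfDegree d) (hd : 0 < d)

include hreg hd in
lemma lazyStep_rowsum (x : V) : ∑ y, lazyStep G x y = 1 := by
  simp only [lazyStep_split, Finset.sum_add_distrib]
  rw [Finset.sum_ite_eq univ x (fun _ => (1/2 : ℝ))]
  have h2 : ∑ y, (if G.Adj x y then 1 / (2 * (G.degree x : ℝ)) else 0)
      = (G.degree x : ℝ) * (1 / (2 * (G.degree x : ℝ))) := by
    rw [Finset.sum_ite, Finset.sum_const_zero, add_zero, Finset.sum_const, nsmul_eq_mul]
    congr 1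
    norm_cast
    rw [← SimpleGraph.neighborFinset_eq_filter, SimpleGraph.degree]
  rw [h2, hreg x]
  have : (0:ℝ) < d := by exact_mod_cast hd
  field_simp
  norm_num

include hreg in
lemma lazyStep_symm (x y : V) : lazyStep G x y = lazyStep G y x := by
  unfold lazyStep
  by_cases h : x = y
  · simp [h]
  · have h' : ¬ y = x := fun hh => h hh.symm
    simp only [h, h', if_false]
    by_cases ha : G.Adj x y
    · rw [if_pos ha, if_pos ha.symm, hreg x, hreg y]
    · rw [if_neg ha, if_neg fun hh => ha hh.symm]

lemma lazyProb_one (x y : V) : lazyProb G 1 x y = lazyStep G x y := by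
  show (∑ z : V, lazyStep G x z * lazyProb G 0 z y) = _
  show (∑ z : V, lazyStep G x z * if z = y then 1 else 0) = _
  simp [Finset.sum_ite_eq]

lemma lazyProb_chapman (m n : ℕ) (x y : V) :
    lazyProb G (m + n) x y = ∑ z, lazyProb G m x z * lazyProb G n z y := by
  induction m generalizing x with
  | zero =>
    rw [Nat.zero_add]
    show lazyProb G n x y = ∑ z, (if x = z then (1:ℝ) else 0) * lazyProb G n z y
    simp [ite_mul]
  | succ m ih =>
    rw [Nat.succ_add]
    show (∑ z : V, lazyStep G x z * lazyProb G (m + n) z y)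
      = ∑ z, (∑ w : V, lazyStep G x w * lazyProb G m w z) * lazyProb G n z y
    rw [Finset.sum_congr rfl fun z _ => by rw [ih z, Finset.mul_sum]]
    rw [Finset.sum_comm]
    simp only [Finset.sum_mul, mul_assoc]

include hreg hd in
lemma lazyProb_rowsum (n : ℕ) (x : V) : ∑ y, lazyProb G n x y = 1 := by
  induction n generalizing x with
  | zero => simp [lazyProb, Finset.sum_ite_eq]
  | succ n ih =>
    show (∑ y, ∑ z : V, lazyStep G x z * lazyProb G n z y) = 1
    rw [Finset.sum_comm]
    simp only [← Finset.mul_sum]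
    rw [Finset.sum_congr rfl fun z _ => by rw [ih z, mul_one]]
    exact lazyStep_rowsum hreg hd x

include hreg hd in
lemma lazyProb_colsum (n : ℕ) (y : V) : ∑ x, lazyProb G n x y = 1 := by
  induction n generalizing y with
  | zero => simp [lazyProb, Finset.sum_ite_eq']
  | succ n ih =>
    show (∑ x, ∑ z : V, lazyStep G x z * lazyProb G n z y) = 1
    rw [Finset.sum_comm]
    have hcol : ∀ z, ∑ x, lazyStep G x z = 1 := fun z => by
      rw [Finset.sum_congr rfl fun x _ => lazyStep_symm hreg x z]
      exact lazyStep_rowsum hreg hd z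
    rw [Finset.sum_congr rfl fun z _ => by
      rw [← Finset.sum_mul, hcol z, one_mul]]
    exact ih y
def natCons {V : Type*} (v : V) (w : ℕ → V) : ℕ → V := fun n =>
  match n with
  | 0 => v
  | n + 1 => w n

lemma extPath_cons {N : ℕ} (v : V) (γ : Fin (N + 1) → V) :
    extPath (N + 1) (Fin.cons v γ) = natCons v (extPath N γ) := by
  funext n
  cases n with
  | zero =>
    unfold extPath natCons
    have h : (⟨min 0 (N+1), Nat.lt_succ_of_le (min_le_right 0 (N+1))⟩ : Fin (N+2)) = 0 :=
      Fin.ext (by simp)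
    rw [h, Fin.cons_zero]
  | succ n =>
    unfold extPath natCons
    have h : (⟨min (n+1) (N+1), Nat.lt_succ_of_le (min_le_right (n+1) (N+1))⟩ : Fin (N+2))
        = Fin.succ ⟨min n N, Nat.lt_succ_of_le (min_le_right n N)⟩ :=
      Fin.ext (by simpa using Nat.succ_min_succ n N)
    rw [h, Fin.cons_succ]

lemma pathWeight_nonneg (G : SimpleGraph V) [DecidableRel G.Adj] {N : ℕ}
    (γ : Fin (N + 1) → V) : 0 ≤ pathWeight G N γ :=
  Finset.prod_nonneg fun _ _ => lazyStep_nonneg G _ _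

lemma pathWeight_cons (G : SimpleGraph V) [DecidableRel G.Adj] {N : ℕ}
    (v : V) (γ : Fin (N + 1) → V) :
    pathWeight G (N + 1) (Fin.cons v γ)
      = lazyStep G v (extPath N γ 0) * pathWeight G N γ := by
  unfold pathWeight
  rw [Finset.prod_range_succ', extPath_cons, mul_comm]
  rfl

lemma sum_ite_and_eq (a : V) (Q : Prop) [Decidable Q] (g : V → ℝ) :
    (∑ x, if x = a ∧ Q then g x else 0) = if Q then g a else 0 := by
  by_cases hQ : Q
  · simp [hQ]
  · simp [hQ]

open Classical in
lemma walkProb_succ (G : SimpleGraph V) [DecidableRel G.Adj]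
    (ρ : V) (N : ℕ) (E : (ℕ → V) → Prop) :
    walkProb G ρ (N + 1) E
      = ∑ x, lazyStep G ρ x * walkProb G x N (fun w => E (natCons ρ w)) := by
  unfold walkProb
  rw [← (Fin.consEquiv (fun _ : Fin (N+2) => V)).sum_comp
    (fun γ => if extPath (N+1) γ 0 = ρ ∧ E (extPath (N+1) γ) then pathWeight G (N+1) γ else 0)]
  rw [Fintype.sum_prod_type]
  have hce : ∀ (x : V) (y : Fin (N+1) → V),
      (Fin.consEquiv fun _ : Fin (N+2) => V) (x, y) = Fin.cons x y := fun _ _ => rfl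
  simp only [hce, extPath_cons, pathWeight_cons]
  have h0 : ∀ (v : V) (w : ℕ → V), natCons v w 0 = v := fun _ _ => rfl
  simp only [h0]
  rw [Finset.sum_eq_single ρ (fun v _ hv => by
      apply Finset.sum_eq_zero; intro γ _; rw [if_neg]; rintro ⟨h1, -⟩; exact hv h1)
    (fun h => absurd (Finset.mem_univ ρ) h)]
  simp only [show ∀ P : Prop, (ρ = ρ ∧ P) = P from fun P => by simp]
  symm
  calc ∑ x, lazyStep G ρ x * ∑ γ : Fin (N+1) → V,
        (if extPath N γ 0 = x ∧ E (natCons ρ (extPath N γ)) then pathWeight G N γ else 0)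
      = ∑ x, ∑ γ : Fin (N+1) → V,
        (if x = extPath N γ 0 ∧ E (natCons ρ (extPath N γ)) then
          lazyStep G ρ x * pathWeight G N γ else 0) := by
        apply Finset.sum_congr rfl; intro x _
        rw [Finset.mul_sum]
        apply Finset.sum_congr rfl; intro γ _
        rw [mul_ite, mul_zero]
        congr 1
        simp [eq_comm, and_comm]
    _ = ∑ γ : Fin (N+1) → V, ∑ x,
        (if x = extPath N γ 0 ∧ E (natCons ρ (extPath N γ)) then
          lazyStep G ρ x * pathWeight G N γ else 0) := Finset.sum_comm
    _ = ∑ γ : Fin (N+1) → V,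
        (if E (natCons ρ (extPath N γ)) then
          lazyStep G ρ (extPath N γ 0) * pathWeight G N γ else 0) := by
        apply Finset.sum_congr rfl; intro γ _
        exact sum_ite_and_eq (extPath N γ 0) (E (natCons ρ (extPath N γ))) _
    _ = _ := by
        apply Finset.sum_congr rfl; intro γ _
        rw [mul_comm]
        by_cases hE : E (natCons ρ (extPath N γ)) <;> simp [hE]

open Classical in
lemma walkProb_true (G : SimpleGraph V) [DecidableRel G.Adj]
    {d : ℕ} (hreg : G.IsRegularOfDegree d) (hd : 0 < d) (ρ : V) (N : ℕ) :
    walkProb G ρ N (fun _ => True) = 1 := by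
  induction N generalizing ρ with
  | zero =>
    unfold walkProb
    rw [← (Equiv.funUnique (Fin 1) V).symm.sum_comp]
    simp only [and_true]
    rw [Finset.sum_eq_single ρ]
    · have : extPath 0 ((Equiv.funUnique (Fin 1) V).symm ρ) 0 = ρ := rfl
      rw [if_pos this]
      unfold pathWeight
      simp
    · intro v _ hv
      rw [if_neg]
      exact fun h => hv h
    · intro h; exact absurd (Finset.mem_univ ρ) h
  | succ N ih =>
    rw [walkProb_succ]
    simp only [ih]
    simp only [mul_one]
    exact lazyStep_rowsum hreg hd ρ

open Classical in
lemma walkProb_single (G : SimpleGraph V) [DecidableRel G.Adj]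
    {d : ℕ} (hreg : G.IsRegularOfDegree d) (hd : 0 < d) :
    ∀ (j N : ℕ) (ρ y : V), j ≤ N →
    walkProb G ρ N (fun w => w j = y) = lazyProb G j ρ y := by
  intro j
  induction j with
  | zero =>
    intro N ρ y _
    have : walkProb G ρ N (fun w => w 0 = y) = if ρ = y then walkProb G ρ N (fun _ => True) else 0 := by
      unfold walkProb
      by_cases h : ρ = y
      · subst h
        rw [if_pos rfl]
        apply Finset.sum_congr rfl; intro γ _
        congr 1
        apply propext
        constructor
        · rintro ⟨h1, _⟩; exact ⟨h1, trivial⟩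
        · rintro ⟨h1, _⟩; exact ⟨h1, h1⟩
      · rw [if_neg h]
        apply Finset.sum_eq_zero; intro γ _
        rw [if_neg]; rintro ⟨h1, h2⟩; exact h (h1 ▸ h2 ▸ rfl)
      done
    rw [this]
    show _ = if ρ = y then (1:ℝ) else 0
    by_cases h : ρ = y <;> simp [h, walkProb_true G hreg hd]
  | succ j ih =>
    intro N ρ y hj
    obtain ⟨N', rfl⟩ : ∃ N', N = N' + 1 := ⟨N - 1, by omega⟩
    rw [walkProb_succ]
    have : ∀ x, walkProb G x N' (fun w => natCons ρ w (j+1) = y)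
        = lazyProb G j x y := by
      intro x
      have h1 : (fun w => natCons ρ w (j+1) = y) = (fun w : ℕ → V => w j = y) := rfl
      rw [h1, ih N' x y (by omega)]
    simp only [this]
    rfl

open Classical in
lemma walkProb_pair (G : SimpleGraph V) [DecidableRel G.Adj]
    {d : ℕ} (hreg : G.IsRegularOfDegree d) (hd : 0 < d) :
    ∀ (i j N : ℕ) (ρ x y : V), i ≤ j → j ≤ N →
    walkProb G ρ N (fun w => w i = x ∧ w j = y)
      = lazyProb G i ρ x * lazyProb G (j - i) x y := by
  intro i
  induction i with
  | zero =>
    intro j N ρ x y _ hjN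
    have : walkProb G ρ N (fun w => w 0 = x ∧ w j = y)
        = if ρ = x then walkProb G ρ N (fun w => w j = y) else 0 := by
      unfold walkProb
      by_cases h : ρ = x
      · subst h
        rw [if_pos rfl]
        apply Finset.sum_congr rfl; intro γ _
        congr 1
        apply propext
        constructor
        · rintro ⟨h1, _, h3⟩; exact ⟨h1, h3⟩
        · rintro ⟨h1, h3⟩; exact ⟨h1, h1, h3⟩
      · rw [if_neg h]
        apply Finset.sum_eq_zero; intro γ _
        rw [if_neg]; rintro ⟨h1, h2, _⟩; exact h (h1 ▸ h2 ▸ rfl)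
    rw [this, walkProb_single G hreg hd j N ρ y hjN]
    show _ = (if ρ = x then (1:ℝ) else 0) * lazyProb G (j - 0) x y
    by_cases h : ρ = x
    · subst h; simp
    · simp [h]
  | succ i ih =>
    intro j N ρ x y hij hjN
    obtain ⟨j', rfl⟩ : ∃ j', j = j' + 1 := ⟨j - 1, by omega⟩
    obtain ⟨N', rfl⟩ : ∃ N', N = N' + 1 := ⟨N - 1, by omega⟩
    rw [walkProb_succ]
    have : ∀ z, walkProb G z N' (fun w => natCons ρ w (i+1) = x ∧ natCons ρ w (j'+1) = y)
        = lazyProb G i z x * lazyProb G (j' - i) x y := fun z =>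
      ih j' N' z x y (by omega) (by omega)
    simp only [this]
    have hsub : j' + 1 - (i + 1) = j' - i := by omega
    rw [hsub]
    show (∑ z, lazyStep G ρ z * (lazyProb G i z x * lazyProb G (j' - i) x y)) = _
    simp only [← mul_assoc]
    rw [← Finset.sum_mul]
    rfl

open Classical in
lemma walkProb_eq_sum (G : SimpleGraph V) [DecidableRel G.Adj]
    (ρ : V) (N i j : ℕ) :
    walkProb G ρ N (fun w => w i = w j)
      = ∑ x, walkProb G ρ N (fun w => w i = x ∧ w j = x) := by
  unfold walkProb
  rw [Finset.sum_comm]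
  apply Finset.sum_congr rfl; intro γ _
  by_cases h : extPath N γ 0 = ρ ∧ extPath N γ i = extPath N γ j
  · rw [if_pos h]
    rw [Finset.sum_eq_single (extPath N γ i)]
    · rw [if_pos ⟨h.1, rfl, h.2.symm⟩]
    · intro x _ hx
      rw [if_neg]; rintro ⟨-, h2, -⟩; exact hx h2.symm
    · intro hmem; exact absurd (Finset.mem_univ _) hmem
  · rw [if_neg h]
    symm
    apply Finset.sum_eq_zero; intro x _
    rw [if_neg]; rintro ⟨h1, h2, h3⟩; exact h ⟨h1, h2.trans h3.symm⟩

open Classical in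
lemma walkProb_mono_le (G : SimpleGraph V) [DecidableRel G.Adj]
    (ρ : V) (N : ℕ) {ι : Type*} (T : Finset ι) (E : (ℕ → V) → Prop)
    (F : ι → (ℕ → V) → Prop)
    (h : ∀ w, E w → ∃ p ∈ T, F p w) :
    walkProb G ρ N E ≤ ∑ p ∈ T, walkProb G ρ N (F p) := by
  unfold walkProb
  rw [Finset.sum_comm]
  apply Finset.sum_le_sum; intro γ _
  by_cases hc : extPath N γ 0 = ρ ∧ E (extPath N γ)
  · rw [if_pos hc]
    obtain ⟨p, hpT, hpF⟩ := h _ hc.2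
    calc pathWeight G N γ
        = (if extPath N γ 0 = ρ ∧ F p (extPath N γ) then pathWeight G N γ else 0) := by
          rw [if_pos ⟨hc.1, hpF⟩]
      _ ≤ ∑ q ∈ T, (if extPath N γ 0 = ρ ∧ F q (extPath N γ) then pathWeight G N γ else 0) := by
          refine Finset.single_le_sum (f := fun q =>
            if extPath N γ 0 = ρ ∧ F q (extPath N γ) then pathWeight G N γ else 0)
            (fun q _ => ?_) hpT
          split_ifs
          · exact pathWeight_nonneg G γ
          · exact le_refl 0
  · rw [if_neg hc]
    apply Finset.sum_nonneg; intro q _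
    split_ifs
    · exact pathWeight_nonneg G γ
    · exact le_refl 0

noncomputable def Mup (H : SimpleGraph V) [DecidableRel H.Adj] (n : ℕ) (y : V) : ℝ :=
  Finset.univ.sup' Finset.univ_nonempty (fun x => lazyProb H n x y)

noncomputable def mlo (H : SimpleGraph V) [DecidableRel H.Adj] (n : ℕ) (y : V) : ℝ :=
  Finset.univ.inf' Finset.univ_nonempty (fun x => lazyProb H n x y)

section mixing

lemma le_Mup (n : ℕ) (x y : V) : lazyProb G n x y ≤ Mup G n y :=
  Finset.le_sup' (fun x => lazyProb G n x y) (Finset.mem_univ x)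

lemma mlo_le (n : ℕ) (x y : V) : mlo G n y ≤ lazyProb G n x y :=
  Finset.inf'_le (fun x => lazyProb G n x y) (Finset.mem_univ x)

lemma mlo_nonneg (n : ℕ) (y : V) : 0 ≤ mlo G n y :=
  Finset.le_inf' Finset.univ_nonempty (fun x => lazyProb G n x y) fun x _ => lazyProb_nonneg G n x y

include hreg hd in
lemma Mup_succ_le (n : ℕ) (y : V) : Mup G (n + 1) y ≤ Mup G n y := by
  refine Finset.sup'_le Finset.univ_nonempty _ fun x _ => ?_
  show (∑ z, lazyStep G x z * lazyProb G n z y) ≤ _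
  calc (∑ z, lazyStep G x z * lazyProb G n z y)
      ≤ ∑ z, lazyStep G x z * Mup G n y :=
        Finset.sum_le_sum fun z _ =>
          mul_le_mul_of_nonneg_left (le_Mup n z y) (lazyStep_nonneg G x z)
    _ = Mup G n y := by rw [← Finset.sum_mul, lazyStep_rowsum hreg hd, one_mul]

include hreg hd in
lemma le_mlo_succ (n : ℕ) (y : V) : mlo G n y ≤ mlo G (n + 1) y := by
  refine Finset.le_inf' Finset.univ_nonempty _ fun x _ => ?_
  show _ ≤ (∑ z, lazyStep G x z * lazyProb G n z y)
  calc mlo G n y = ∑ z, lazyStep G x z * mlo G n y := by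
        rw [← Finset.sum_mul, lazyStep_rowsum hreg hd, one_mul]
    _ ≤ ∑ z, lazyStep G x z * lazyProb G n z y :=
        Finset.sum_le_sum fun z _ =>
          mul_le_mul_of_nonneg_left (mlo_le n z y) (lazyStep_nonneg G x z)

include hreg hd in
lemma Mup_mono (n k : ℕ) (y : V) : Mup G (n + k) y ≤ Mup G n y := by
  induction k with
  | zero => exact le_refl _
  | succ k ih => exact (Mup_succ_le hreg hd (n + k) y).trans ih

include hreg hd in
lemma mlo_mono (n k : ℕ) (y : V) : mlo G n y ≤ mlo G (n + k) y := by
  induction k with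
  | zero => exact le_refl _
  | succ k ih => exact ih.trans (le_mlo_succ hreg hd (n + k) y)

include hreg hd in
lemma mlo_le_inv_card (n : ℕ) (y : V) :
    mlo G n y ≤ 1 / (Fintype.card V : ℝ) := by
  have hcol := lazyProb_colsum hreg hd n y
  have hcard : 0 < (Fintype.card V : ℝ) := by
    exact_mod_cast Fintype.card_pos
  by_contra h
  push_neg at h
  have : (1:ℝ) < ∑ x, lazyProb G n x y := by
    calc (1:ℝ) = ∑ _x : V, 1 / (Fintype.card V : ℝ) := by
          rw [Finset.sum_const, Finset.card_univ, nsmul_eq_mul]; field_simp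
      _ < ∑ x, lazyProb G n x y := by
          apply Finset.sum_lt_sum_of_nonempty Finset.univ_nonempty
          intro x _
          exact lt_of_lt_of_le h (mlo_le n x y)
  rw [hcol] at this
  exact lt_irrefl 1 this

include hreg hd in
lemma inv_card_le_Mup (n : ℕ) (y : V) :
    1 / (Fintype.card V : ℝ) ≤ Mup G n y := by
  have hcol := lazyProb_colsum hreg hd n y
  have hcard : 0 < (Fintype.card V : ℝ) := by exact_mod_cast Fintype.card_pos
  by_contra h
  push_neg at h
  have : (∑ x, lazyProb G n x y) < 1 := by
    calc (∑ x, lazyProb G n x y) < ∑ _x : V, 1 / (Fintype.card V : ℝ) := by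
          apply Finset.sum_lt_sum_of_nonempty Finset.univ_nonempty
          intro x _
          exact lt_of_le_of_lt (le_Mup n x y) h
      _ = 1 := by rw [Finset.sum_const, Finset.card_univ, nsmul_eq_mul]; field_simp
  rw [hcol] at this
  exact lt_irrefl 1 this

include hreg hd in
lemma doeblin_gap (n₀ : ℕ) (ε : ℝ) (hε0 : 0 ≤ ε)
    (hε : ∀ x z, ε ≤ lazyProb G n₀ x z) (n : ℕ) (y : V) :
    Mup G (n₀ + n) y - mlo G (n₀ + n) y
      ≤ (1 - (Fintype.card V : ℝ) * ε) * (Mup G n y - mlo G n y) := by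
  set N : ℝ := (Fintype.card V : ℝ)
  have hM : Mup G (n₀ + n) y ≤ (1 - N * ε) * Mup G n y + ε := by
    refine Finset.sup'_le Finset.univ_nonempty _ fun x _ => ?_
    rw [lazyProb_chapman]
    have : ∀ z, lazyProb G n₀ x z * lazyProb G n z y
        = (lazyProb G n₀ x z - ε) * lazyProb G n z y + ε * lazyProb G n z y := by
      intro z; ring
    rw [Finset.sum_congr rfl fun z _ => this z, Finset.sum_add_distrib,
      ← Finset.mul_sum, lazyProb_colsum hreg hd, mul_one]
    refine add_le_add ?_ le_rfl
    calc (∑ z, (lazyProb G n₀ x z - ε) * lazyProb G n z y)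
        ≤ ∑ z, (lazyProb G n₀ x z - ε) * Mup G n y :=
          Finset.sum_le_sum fun z _ =>
            mul_le_mul_of_nonneg_left (le_Mup n z y) (by linarith [hε x z])
      _ = (1 - N * ε) * Mup G n y := by
          rw [← Finset.sum_mul, Finset.sum_sub_distrib, lazyProb_rowsum hreg hd,
            Finset.sum_const, Finset.card_univ, nsmul_eq_mul]
  have hm : (1 - N * ε) * mlo G n y + ε ≤ mlo G (n₀ + n) y := by
    refine Finset.le_inf' Finset.univ_nonempty _ fun x _ => ?_
    rw [lazyProb_chapman]
    have : ∀ z, lazyProb G n₀ x z * lazyProb G n z y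
        = (lazyProb G n₀ x z - ε) * lazyProb G n z y + ε * lazyProb G n z y := by
      intro z; ring
    rw [Finset.sum_congr rfl fun z _ => this z, Finset.sum_add_distrib,
      ← Finset.mul_sum, lazyProb_colsum hreg hd, mul_one]
    refine add_le_add ?_ le_rfl
    calc (1 - N * ε) * mlo G n y
        = ∑ z, (lazyProb G n₀ x z - ε) * mlo G n y := by
          rw [← Finset.sum_mul, Finset.sum_sub_distrib, lazyProb_rowsum hreg hd,
            Finset.sum_const, Finset.card_univ, nsmul_eq_mul]
      _ ≤ ∑ z, (lazyProb G n₀ x z - ε) * lazyProb G n z y :=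
          Finset.sum_le_sum fun z _ =>
            mul_le_mul_of_nonneg_left (mlo_le n z y) (by linarith [hε x z])
  linarith


include hreg hd in
lemma exists_pos_all (hconn : G.Connected) :
    ∃ n₀ : ℕ, ∀ x y : V, 0 < lazyProb G n₀ x y := by
  have hstep_pos : ∀ {x y : V}, G.Adj x y → 0 < lazyStep G x y := by
    intro x y hxy
    unfold lazyStep
    rw [if_neg hxy.ne, if_pos hxy, hreg x]
    have : (0:ℝ) < d := by exact_mod_cast hd
    positivity
  have hstay : ∀ x : V, 0 < lazyStep G x x := by
    intro x; unfold lazyStep; rw [if_pos rfl]; norm_num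
  have hsucc : ∀ {n : ℕ} {x y : V}, 0 < lazyProb G n x y → 0 < lazyProb G (n + 1) x y := by
    intro n x y h
    show 0 < ∑ z, lazyStep G x z * lazyProb G n z y
    apply Finset.sum_pos'
    · intro z _; exact mul_nonneg (lazyStep_nonneg G x z) (lazyProb_nonneg G n z y)
    · exact ⟨x, Finset.mem_univ x, mul_pos (hstay x) h⟩
  have hwalk : ∀ {x y : V}, G.Walk x y → ∃ n, 0 < lazyProb G n x y := by
    intro x y w
    induction w with
    | nil => exact ⟨0, by simp [lazyProb]⟩
    | @cons a b c h q ih =>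
      obtain ⟨n, hn⟩ := ih
      refine ⟨n + 1, ?_⟩
      show 0 < ∑ z, lazyStep G a z * lazyProb G n z c
      apply Finset.sum_pos'
      · intro z _; exact mul_nonneg (lazyStep_nonneg G a z) (lazyProb_nonneg G n z c)
      · exact ⟨b, Finset.mem_univ b, mul_pos (hstep_pos h) hn⟩
  have hreach : ∀ x y : V, ∃ n, 0 < lazyProb G n x y := by
    intro x y
    obtain ⟨w⟩ := hconn.preconnected x y
    exact hwalk w
  choose f hf using hreach
  refine ⟨Finset.univ.sup (fun x => Finset.univ.sup (f x)), fun x y => ?_⟩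
  have hle : f x y ≤ Finset.univ.sup (fun x => Finset.univ.sup (f x)) :=
    le_trans (Finset.le_sup (Finset.mem_univ y))
      (Finset.le_sup (f := fun x => Finset.univ.sup (f x)) (Finset.mem_univ x))
  have : ∀ m, f x y ≤ m → 0 < lazyProb G m x y := by
    intro m hm
    induction m with
    | zero =>
      have : f x y = 0 := Nat.le_zero.mp hm
      exact this ▸ hf x y
    | succ m ih =>
      rcases Nat.lt_or_ge (f x y) (m + 1) with h | h
      · exact hsucc (ih (by omega))
      · have : f x y = m + 1 := by omega
        exact this ▸ hf x y
  exact this _ hle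

include hreg hd in
lemma statDist_eq (y : V) : statDist G y = 1 / (Fintype.card V : ℝ) := by
  unfold statDist
  have hsum : ∑ v : V, G.degree v = 2 * G.edgeFinset.card :=
    G.sum_degrees_eq_twice_card_edges
  have h2 : (Fintype.card V) * d = 2 * G.edgeFinset.card := by
    rw [← hsum, Finset.sum_congr rfl fun v _ => hreg v, Finset.sum_const,
      Finset.card_univ, smul_eq_mul]
  have h2' : (2:ℝ) * (G.edgeFinset.card : ℝ) = (Fintype.card V : ℝ) * (d : ℝ) := by
    exact_mod_cast h2.symm
  rw [hreg y, h2']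
  have h0 : (0:ℝ) < d := by exact_mod_cast hd
  have hc : (0:ℝ) < (Fintype.card V : ℝ) := by exact_mod_cast Fintype.card_pos
  field_simp

include hreg hd in
lemma gap_pow (n₀ : ℕ) (ε : ℝ) (hε0 : 0 ≤ ε)
    (hε : ∀ x z, ε ≤ lazyProb G n₀ x z)
    (hNε : (Fintype.card V : ℝ) * ε ≤ 1) (k : ℕ) (y : V) :
    Mup G (k * n₀) y - mlo G (k * n₀) y ≤ (1 - (Fintype.card V : ℝ) * ε) ^ k := by
  induction k with
  | zero =>
    simp only [Nat.zero_mul, pow_zero]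
    have h1 : Mup G 0 y ≤ 1 := by
      refine Finset.sup'_le Finset.univ_nonempty _ fun x _ => ?_
      show (if x = y then (1:ℝ) else 0) ≤ 1
      split_ifs <;> norm_num
    have h2 := mlo_nonneg (G := G) 0 y
    linarith
  | succ k ih =>
    have hk : (k + 1) * n₀ = n₀ + k * n₀ := by ring
    rw [hk, pow_succ]
    calc Mup G (n₀ + k * n₀) y - mlo G (n₀ + k * n₀) y
        ≤ (1 - (Fintype.card V : ℝ) * ε) * (Mup G (k * n₀) y - mlo G (k * n₀) y) :=
          doeblin_gap hreg hd n₀ ε hε0 hε (k * n₀) y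
      _ ≤ (1 - (Fintype.card V : ℝ) * ε) * (1 - (Fintype.card V : ℝ) * ε) ^ k :=
          mul_le_mul_of_nonneg_left ih (by linarith)
      _ = (1 - (Fintype.card V : ℝ) * ε) ^ (k + 1) := by rw [pow_succ]; ring

include hreg hd in
lemma tmix_bound (hconn : G.Connected) :
    ∀ n, tmix G ≤ n → ∀ x y : V, lazyProb G n x y ≤ 2 / (Fintype.card V : ℝ) := by
  have hc : (0:ℝ) < (Fintype.card V : ℝ) := by exact_mod_cast Fintype.card_pos
  -- Step 1: the defining set of tmix is nonempty
  obtain ⟨n₀, hn₀⟩ := exists_pos_all hreg hd hconn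
  set ε : ℝ := Finset.univ.inf' Finset.univ_nonempty
    (fun x => Finset.univ.inf' Finset.univ_nonempty (fun z => lazyProb G n₀ x z)) with hεdef
  have hε : ∀ x z, ε ≤ lazyProb G n₀ x z := by
    intro x z
    exact le_trans (Finset.inf'_le _ (Finset.mem_univ x))
      (Finset.inf'_le _ (Finset.mem_univ z))
  have hε0 : 0 < ε := by
    rw [hεdef, Finset.lt_inf'_iff]
    intro x _
    rw [Finset.lt_inf'_iff]
    intro z _
    exact hn₀ x z
  have hNε : (Fintype.card V : ℝ) * ε ≤ 1 := by
    obtain ⟨x⟩ := (inferInstance : Nonempty V)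
    calc (Fintype.card V : ℝ) * ε = ∑ _z : V, ε := by
          rw [Finset.sum_const, Finset.card_univ, nsmul_eq_mul]
      _ ≤ ∑ z, lazyProb G n₀ x z := Finset.sum_le_sum fun z _ => hε x z
      _ = 1 := lazyProb_rowsum hreg hd n₀ x
  have hr1 : (1 - (Fintype.card V : ℝ) * ε) < 1 := by
    have : 0 < (Fintype.card V : ℝ) * ε := mul_pos hc hε0
    linarith
  have hr0 : 0 ≤ (1 - (Fintype.card V : ℝ) * ε) := by linarith
  obtain ⟨k, hk⟩ := exists_pow_lt_of_lt_one
    (show (0:ℝ) < 1 / (4 * (Fintype.card V : ℝ)) by positivity) hr1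
  have habs : ∀ n (x y : V), |lazyProb G n x y - 1 / (Fintype.card V : ℝ)|
      ≤ Mup G n y - mlo G n y := by
    intro n x y
    rw [abs_le]
    constructor
    · have := le_Mup (G := G) n x y
      have := inv_card_le_Mup hreg hd n y
      have := mlo_le (G := G) n x y
      have := mlo_le_inv_card hreg hd n y
      linarith
    · have := le_Mup (G := G) n x y
      have := inv_card_le_Mup hreg hd n y
      have := mlo_le (G := G) n x y
      have := mlo_le_inv_card hreg hd n y
      linarith
  have hmem : (k * n₀) ∈ {n : ℕ | ∀ x y : V, |lazyProb G n x y / statDist G y - 1| ≤ 1 / 4} := by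
    intro x y
    rw [statDist_eq hreg hd y]
    have h1 : lazyProb G (k * n₀) x y / (1 / (Fintype.card V : ℝ)) - 1
        = (Fintype.card V : ℝ) * (lazyProb G (k * n₀) x y - 1 / (Fintype.card V : ℝ)) := by
      field_simp
    rw [h1, abs_mul, abs_of_pos hc]
    calc (Fintype.card V : ℝ) * |lazyProb G (k * n₀) x y - 1 / (Fintype.card V : ℝ)|
        ≤ (Fintype.card V : ℝ) * ((1 - (Fintype.card V : ℝ) * ε) ^ k) := by
          apply mul_le_mul_of_nonneg_left _ (le_of_lt hc)
          exact le_trans (habs _ x y) (gap_pow hreg hd n₀ ε (le_of_lt hε0) hε hNε k y)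
      _ ≤ (Fintype.card V : ℝ) * (1 / (4 * (Fintype.card V : ℝ))) := by
          apply mul_le_mul_of_nonneg_left (le_of_lt hk) (le_of_lt hc)
      _ = 1 / 4 := by field_simp
  -- Step 2: tmix satisfies its defining property
  have htm : ∀ x y : V, |lazyProb G (tmix G) x y / statDist G y - 1| ≤ 1 / 4 :=
    Nat.sInf_mem (Set.nonempty_of_mem hmem)
  -- Step 3: gap at tmix is at most 1/(2N)
  have hgap_t : ∀ y, Mup G (tmix G) y - mlo G (tmix G) y
      ≤ 1 / (2 * (Fintype.card V : ℝ)) := by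
    intro y
    have hxy : ∀ x : V, |lazyProb G (tmix G) x y - 1 / (Fintype.card V : ℝ)|
        ≤ 1 / (4 * (Fintype.card V : ℝ)) := by
      intro x
      have := htm x y
      rw [statDist_eq hreg hd y] at this
      have h1 : lazyProb G (tmix G) x y / (1 / (Fintype.card V : ℝ)) - 1
          = (Fintype.card V : ℝ) * (lazyProb G (tmix G) x y - 1 / (Fintype.card V : ℝ)) := by
        field_simp
      rw [h1, abs_mul, abs_of_pos hc] at this
      rw [show (1:ℝ) / (4 * (Fintype.card V : ℝ)) = (1/4) / (Fintype.card V : ℝ) by ring]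
      rw [le_div_iff₀ hc]
      linarith
    have hub : Mup G (tmix G) y ≤ 1 / (Fintype.card V : ℝ) + 1 / (4 * (Fintype.card V : ℝ)) := by
      refine Finset.sup'_le Finset.univ_nonempty _ fun x _ => ?_
      have := abs_le.mp (hxy x)
      linarith [this.2]
    have hlb : 1 / (Fintype.card V : ℝ) - 1 / (4 * (Fintype.card V : ℝ)) ≤ mlo G (tmix G) y := by
      refine Finset.le_inf' Finset.univ_nonempty _ fun x _ => ?_
      have := abs_le.mp (hxy x)
      linarith [this.1]
    have : (1:ℝ) / (4 * (Fintype.card V : ℝ)) + 1 / (4 * (Fintype.card V : ℝ))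
        = 1 / (2 * (Fintype.card V : ℝ)) := by field_simp; ring
    linarith
  -- Step 4: conclude
  intro n hn x y
  obtain ⟨m, rfl⟩ : ∃ m, n = tmix G + m := ⟨n - tmix G, by omega⟩
  have h1 : lazyProb G (tmix G + m) x y ≤ Mup G (tmix G + m) y := le_Mup _ x y
  have h2 : Mup G (tmix G + m) y ≤ Mup G (tmix G) y := Mup_mono hreg hd _ m y
  have h3 : mlo G (tmix G) y ≤ 1 / (Fintype.card V : ℝ) := mlo_le_inv_card hreg hd _ y
  have h4 := hgap_t y
  have h5 : (1:ℝ) / (Fintype.card V : ℝ) + 1 / (2 * (Fintype.card V : ℝ))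
      ≤ 2 / (Fintype.card V : ℝ) := by
    rw [div_add_div _ _ (ne_of_gt hc) (by positivity), div_le_div_iff₀ (by positivity) hc]
    ring_nf
    nlinarith
  linarith

end mixing
end AuxLemmas

/-- Range self-intersection probability, two intervals. -/
theorem range_self_intersection_two_intervals
    (G : SimpleGraph V) [DecidableRel G.Adj] (hconn : G.Connected)
    (hcard : 2 ≤ Fintype.card V) (d : ℕ) (hreg : G.IsRegularOfDegree d)
    (s : ℕ) (hs : tmix G + 1 ≤ s)
    (a₁ b₁ a₂ b₂ : ℕ) (h₁ : a₁ ≤ b₁) (h₂ : a₂ ≤ b₂)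
    (ha₁ : s ≤ a₁) (hsep : b₁ + s ≤ a₂) (ρ : V) :
    walkProb G ρ b₂ (fun w =>
        (walkRange w (Finset.Icc a₁ b₁) ∩ walkRange w (Finset.Icc a₂ b₂)).Nonempty) ≤
      4 * ((Finset.Icc a₁ b₁).card : ℝ) * ((Finset.Icc a₂ b₂).card : ℝ) /
        (Fintype.card V : ℝ) := by
  classical
  have hd : 0 < d := by
    obtain ⟨x⟩ := (inferInstance : Nonempty V)
    obtain ⟨y, hy⟩ := Fintype.exists_ne_of_one_lt_card (by omega) x
    obtain ⟨w⟩ := hconn.preconnected y x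
    cases w with
    | nil => exact absurd rfl hy
    | @cons _ b _ h _ =>
      rw [← hreg y]
      rw [← SimpleGraph.card_neighborFinset_eq_degree]
      exact Finset.card_pos.mpr ⟨b, (SimpleGraph.mem_neighborFinset G y b).mpr h⟩
  have hc : (0:ℝ) < (Fintype.card V : ℝ) := by exact_mod_cast Fintype.card_pos
  set A₁ := Finset.Icc a₁ b₁
  set A₂ := Finset.Icc a₂ b₂
  have himp : ∀ w : ℕ → V, (walkRange w A₁ ∩ walkRange w A₂).Nonempty →
      ∃ p ∈ A₁ ×ˢ A₂, w p.1 = w p.2 := by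
    intro w hw
    obtain ⟨x, hx⟩ := hw
    rw [Finset.mem_inter] at hx
    obtain ⟨i, hi, hwi⟩ := Finset.mem_image.mp hx.1
    obtain ⟨j, hj, hwj⟩ := Finset.mem_image.mp hx.2
    exact ⟨(i, j), Finset.mem_product.mpr ⟨hi, hj⟩, by rw [hwi, hwj]⟩
  have step1 := walkProb_mono_le G ρ b₂ (A₁ ×ˢ A₂) _ (fun p w => w p.1 = w p.2) himp
  have hpair : ∀ p ∈ A₁ ×ˢ A₂,
      walkProb G ρ b₂ (fun w => w p.1 = w p.2) ≤ 4 / (Fintype.card V : ℝ) := by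
    intro p hp
    obtain ⟨hp1, hp2⟩ := Finset.mem_product.mp hp
    rw [Finset.mem_Icc] at hp1 hp2
    have hij : p.1 ≤ p.2 := by omega
    have hjN : p.2 ≤ b₂ := hp2.2
    rw [walkProb_eq_sum]
    have hform : ∀ x, walkProb G ρ b₂ (fun w => w p.1 = x ∧ w p.2 = x)
        = lazyProb G p.1 ρ x * lazyProb G (p.2 - p.1) x x := fun x =>
      walkProb_pair G hreg hd p.1 p.2 b₂ ρ x x hij hjN
    have ht1 : tmix G ≤ p.1 := by omega
    have ht2 : tmix G ≤ p.2 - p.1 := by omega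
    calc (∑ x, walkProb G ρ b₂ (fun w => w p.1 = x ∧ w p.2 = x))
        = ∑ x, lazyProb G p.1 ρ x * lazyProb G (p.2 - p.1) x x :=
          Finset.sum_congr rfl fun x _ => hform x
      _ ≤ ∑ _x : V, (2 / (Fintype.card V : ℝ)) * (2 / (Fintype.card V : ℝ)) := by
          apply Finset.sum_le_sum
          intro x _
          exact mul_le_mul (tmix_bound hreg hd hconn p.1 ht1 ρ x)
            (tmix_bound hreg hd hconn (p.2 - p.1) ht2 x x)
            (lazyProb_nonneg G _ x x) (by positivity)
      _ = 4 / (Fintype.card V : ℝ) := by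
          rw [Finset.sum_const, Finset.card_univ, nsmul_eq_mul]
          field_simp
          ring
  calc walkProb G ρ b₂ (fun w => (walkRange w A₁ ∩ walkRange w A₂).Nonempty)
      ≤ ∑ p ∈ A₁ ×ˢ A₂, walkProb G ρ b₂ (fun w => w p.1 = w p.2) := step1
    _ ≤ ∑ _p ∈ A₁ ×ˢ A₂, 4 / (Fintype.card V : ℝ) := Finset.sum_le_sum hpair
    _ = ((A₁ ×ˢ A₂).card : ℝ) * (4 / (Fintype.card V : ℝ)) := by
        rw [Finset.sum_const, nsmul_eq_mul]
    _ = 4 * (A₁.card : ℝ) * (A₂.card : ℝ) / (Fintype.card V : ℝ) := by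
        rw [Finset.card_product]
        push_cast
        field_simp
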